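/- Let H, K be complex Hilbert spaces, S a commutative monoid with unit 1 equipped with a star operation (star (s*t) = star s * star t, star (star s) = s, star 1 = 1), J : H → K a linear isometry, and π : S → (K →L[ℂ] K) a representation: π 1 = 1, π (s*t) = (π s) ∘ (π t), π (star s) = (π s)†. Assume the minimality condition: the closed linear span of { (π s) (J h) : s ∈ S, h ∈ H } equals K. Define φ s := J† ∘ (π s) ∘ J. If u, v, w ∈ S are such that φ (s*u*t) + φ (s*v*t) = φ (s*w*t) for all s, t ∈ S, then π w = π u + π v. -/

import Mathlib

open ContinuousLinearMap
open scoped InnerProductSpace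

/-- **Theorem 5.1 (ii) (single Hilbert space).**  Let `π` be a minimal `*`-representation
of a commutative `*`-monoid `S` dilating `φ s = J† ∘ π s ∘ J`.  If
`φ (s*u*t) + φ (s*v*t) = φ (s*w*t)` for all `s, t ∈ S`, then `π w = π u + π v`. -/
theorem minimal_dilation_additive_relation
    {H K : Type*} [NormedAddCommGroup H] [InnerProductSpace ℂ H] [CompleteSpace H]
    [NormedAddCommGroup K] [InnerProductSpace ℂ K] [CompleteSpace K]
    {S : Type*} [CommMonoid S] [StarMul S]
    (J : H →ₗᵢ[ℂ] K) (π : S → (K →L[ℂ] K))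
    (hπ1 : π 1 = 1)
    (hπmul : ∀ s t : S, π (s * t) = π s ∘L π t)
    (hπstar : ∀ s : S, π (star s) = adjoint (π s))
    (hmin : (Submodule.span ℂ
        {x : K | ∃ (s : S) (h : H), π s (J h) = x}).topologicalClosure = ⊤)
    (φ : S → (H →L[ℂ] H))
    (hφ : ∀ s : S, φ s =
      adjoint J.toContinuousLinearMap ∘L π s ∘L J.toContinuousLinearMap)
    (u v w : S)
    (huvw : ∀ s t : S, φ (s * u * t) + φ (s * v * t) = φ (s * w * t)) :
    π w = π u + π v := by
  have key : ∀ (r s t : S) (h g : H),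
      ⟪π r (π s (J h)), π t (J g)⟫_ℂ = ⟪(φ (star t * r * s)) h, g⟫_ℂ := by
    intro r s t h g
    have h1 : ⟪π r (π s (J h)), π t (J g)⟫_ℂ
        = ⟪π (star t * r * s) (J h), J g⟫_ℂ := by
      rw [← adjoint_inner_left (π t), ← hπstar]
      congr 1
      rw [hπmul, hπmul]
      rfl
    rw [h1, hφ]
    simp only [comp_apply, adjoint_inner_left, LinearIsometry.coe_toContinuousLinearMap]
  set T := π w - (π u + π v) with hT
  have hTx : ∀ (s : S) (h : H), T (π s (J h)) = 0 := by
    intro s h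
    have horth : ∀ y : K, ⟪T (π s (J h)), y⟫_ℂ = 0 := by
      have hker : Submodule.span ℂ {x : K | ∃ (t : S) (g : H), π t (J g) = x}
          ≤ (innerSL ℂ (T (π s (J h)))).ker := by
        rw [Submodule.span_le]
        rintro y ⟨t, g, rfl⟩
        simp only [SetLike.mem_coe, LinearMap.mem_ker, ContinuousLinearMap.coe_coe, innerSL_apply_apply]
        have hw := key w s t h g
        have hu := key u s t h g
        have hv := key v s t h g
        have hrel := huvw (star t) s
        have : T (π s (J h)) = π w (π s (J h)) - (π u (π s (J h)) + π v (π s (J h))) := by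
          simp [hT]
        rw [this, inner_sub_left, inner_add_left, hw, hu, hv, ← hrel]
        simp [inner_add_left]
      have hclosed : (Submodule.span ℂ
          {x : K | ∃ (t : S) (g : H), π t (J g) = x}).topologicalClosure
          ≤ (innerSL ℂ (T (π s (J h)))).ker :=
        Submodule.topologicalClosure_minimal _ hker
          (ContinuousLinearMap.isClosed_ker _)
      intro y
      have : y ∈ (innerSL ℂ (T (π s (J h)))).ker := by
        apply hclosed
        rw [hmin]
        trivial
      simpa using this
    have := horth (T (π s (J h)))
    simpa [inner_self_eq_zero] using this
  have hT0 : T = 0 := by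
    have hker : Submodule.span ℂ {x : K | ∃ (t : S) (g : H), π t (J g) = x}
        ≤ T.ker := by
      rw [Submodule.span_le]
      rintro y ⟨t, g, rfl⟩
      exact hTx t g
    have hclosed : (Submodule.span ℂ
        {x : K | ∃ (t : S) (g : H), π t (J g) = x}).topologicalClosure
        ≤ T.ker :=
      Submodule.topologicalClosure_minimal _ hker (ContinuousLinearMap.isClosed_ker _)
    ext y
    have : y ∈ T.ker := by
      apply hclosed; rw [hmin]; trivial
    simpa using this
  exact sub_eq_zero.mp hT0
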